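/- On a finite tree graph T with r > 0, every stationary state of the system dx_i/dt = Σ_{j~i}[r(x_i − x_j) − (x_i − x_j)³] is a detailed-balance state, i.e. satisfies (x*_i − x*_j) ∈ {0, √r, −√r} for every edge i~j. -/

import Mathlib

open Finset Matrix Polynomial
open scoped Classical

/-- Right-hand side of the dynamics `dx_i/dt = Σ_{j~i} (r(x_i-x_j) - (x_i-x_j)^3)`. -/
noncomputable def rhs {N : ℕ} (G : SimpleGraph (Fin N)) (r : ℝ) (x : Fin N → ℝ) (i : Fin N) : ℝ :=
  ∑ j ∈ G.neighborFinset i, (r * (x i - x j) - (x i - x j) ^ 3)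

/-- Graph Laplacian matrix. -/
noncomputable def lap {N : ℕ} (G : SimpleGraph (Fin N)) : Matrix (Fin N) (Fin N) ℝ :=
  fun i j => if i = j then (G.degree i : ℝ) else if G.Adj i j then -1 else 0

/-- Laplacian of the subgraph of consensus edges (edges with `x i = x j`). -/
noncomputable def lapEq {N : ℕ} (G : SimpleGraph (Fin N)) (x : Fin N → ℝ) :
    Matrix (Fin N) (Fin N) ℝ :=
  fun i j => if i = j then (((G.neighborFinset i).filter (fun k => x i = x k)).card : ℝ)
    else if G.Adj i j ∧ x i = x j then -1 else 0

/-- Laplacian of the subgraph of dissensus edges (edges with `x i ≠ x j`). -/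
noncomputable def lapNe {N : ℕ} (G : SimpleGraph (Fin N)) (x : Fin N → ℝ) :
    Matrix (Fin N) (Fin N) ℝ :=
  fun i j => if i = j then (((G.neighborFinset i).filter (fun k => x i ≠ x k)).card : ℝ)
    else if G.Adj i j ∧ x i ≠ x j then -1 else 0

/-- `Qp` is the Moore–Penrose pseudoinverse of `Q`. -/
def IsMP {N : ℕ} (Q Qp : Matrix (Fin N) (Fin N) ℝ) : Prop :=
  Q * Qp * Q = Q ∧ Qp * Q * Qp = Qp ∧ (Q * Qp)ᵀ = Q * Qp ∧ (Qp * Q)ᵀ = Qp * Q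

/-- The indicator difference vector `e_i - e_j`. -/
noncomputable def ev {N : ℕ} (i j : Fin N) : Fin N → ℝ := Pi.single i 1 - Pi.single j 1

/-- Effective resistance `ω_ij = (e_i-e_j)ᵀ Q⁺ (e_i-e_j)` given a pseudoinverse `Qp` of `Q`. -/
noncomputable def effRes {N : ℕ} (Qp : Matrix (Fin N) (Fin N) ℝ) (i j : Fin N) : ℝ :=
  ev i j ⬝ᵥ (Qp *ᵥ ev i j)

/-- A detailed-balance state: every edge difference lies in `{0, √r, -√r}`. -/
def DetailedBalance {N : ℕ} (G : SimpleGraph (Fin N)) (r : ℝ) (x : Fin N → ℝ) : Prop :=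
  ∀ i j, G.Adj i j → (x i - x j = 0 ∨ x i - x j = Real.sqrt r ∨ x i - x j = - Real.sqrt r)

/-- `M` is negative definite on the subspace orthogonal to the constant vector. -/
def NegDefOrth {N : ℕ} (M : Matrix (Fin N) (Fin N) ℝ) : Prop :=
  ∀ z : Fin N → ℝ, z ≠ 0 → ∑ k, z k = 0 → z ⬝ᵥ (M *ᵥ z) < 0

/-- `M` has a positive eigenvalue. -/
def HasPosEig {N : ℕ} (M : Matrix (Fin N) (Fin N) ℝ) : Prop :=
  ∃ (μ : ℝ) (z : Fin N → ℝ), 0 < μ ∧ z ≠ 0 ∧ M *ᵥ z = μ • z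

/-- The Jacobian of the dynamics `rhs` at a state `x`, defined entrywise via partial
derivatives. -/
noncomputable def jac {N : ℕ} (G : SimpleGraph (Fin N)) (r : ℝ) (x : Fin N → ℝ) :
    Matrix (Fin N) (Fin N) ℝ :=
  fun i j => deriv (fun t => rhs G r (Function.update x j t) i) (x j)

/-- The solution `α(t) = α₀ (α₀² - (α₀²-1) e^{-2μrt})^{-1/2}` of the Bernoulli ODE. -/
noncomputable def alph (a0 mu r : ℝ) (t : ℝ) : ℝ :=
  a0 / Real.sqrt (a0 ^ 2 - (a0 ^ 2 - 1) * Real.exp (-(2 * mu * r * t)))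

/-- on a tree, every stationary state is a detailed-balance state. -/

theorem tree_flow_zero {N : ℕ} {G : SimpleGraph (Fin N)} (hT : G.IsTree)
    (φ : Fin N → Fin N → ℝ) (hanti : ∀ k l, φ k l = -φ l k)
    (hdiv : ∀ k, ∑ l ∈ G.neighborFinset k, φ k l = 0)
    {i j : Fin N} (hij : G.Adj i j) : φ i j = 0 := by
  set G' := G.deleteEdges {s(i,j)} with hG'
  have hbridge : ¬ G'.Reachable i j :=
    ((SimpleGraph.isAcyclic_iff_forall_adj_isBridge.mp hT.IsAcyclic) hij)
  set S : Finset (Fin N) := univ.filter (fun k => G'.Reachable i k) with hS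
  have hiS : i ∈ S := by simp only [hS, mem_filter, mem_univ, true_and]; exact SimpleGraph.Reachable.refl i
  have hjS : j ∉ S := by simp [hS, hbridge]
  have hcross : ∀ k ∈ S, ∀ l, l ∈ (G.neighborFinset k).filter (fun l => l ∉ S) →
      k = i ∧ l = j := by
    intro k hk l hl
    simp only [mem_filter, SimpleGraph.mem_neighborFinset] at hl
    obtain ⟨hadj, hlS⟩ := hl
    have hkreach : G'.Reachable i k := by simpa [hS] using hk
    by_cases he : s(k,l) = s(i,j)
    · rw [Sym2.eq_iff] at he
      rcases he with ⟨rfl, rfl⟩ | ⟨rfl, rfl⟩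
      · exact ⟨rfl, rfl⟩
      · exact absurd hk hjS
    · exfalso
      have hadj' : G'.Adj k l := by
        rw [hG', SimpleGraph.deleteEdges_adj]
        exact ⟨hadj, by simpa using he⟩
      apply hlS
      simp only [hS, mem_filter, mem_univ, true_and]
      exact hkreach.trans hadj'.reachable
  have htot : ∑ k ∈ S, ∑ l ∈ G.neighborFinset k, φ k l = 0 :=
    Finset.sum_eq_zero fun k _ => hdiv k
  have hsplit : ∀ k, ∑ l ∈ G.neighborFinset k, φ k l =
      (∑ l ∈ (G.neighborFinset k).filter (fun l => l ∈ S), φ k l)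
      + ∑ l ∈ (G.neighborFinset k).filter (fun l => l ∉ S), φ k l :=
    fun k => (Finset.sum_filter_add_sum_filter_not _ _ _).symm
  have hA : ∑ k ∈ S, ∑ l ∈ (G.neighborFinset k).filter (fun l => l ∈ S), φ k l = 0 := by
    have hrw : ∀ k, ∑ l ∈ (G.neighborFinset k).filter (fun l => l ∈ S), φ k l
        = ∑ l ∈ S, if G.Adj k l then φ k l else 0 := by
      intro k
      rw [Finset.sum_filter, Finset.sum_filter]
      rw [SimpleGraph.neighborFinset_eq_filter, Finset.sum_filter]
      apply Finset.sum_congr rfl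
      intro l _
      by_cases h1 : G.Adj k l <;> by_cases h2 : G'.Reachable i l <;>
        simp [h1, h2, hS]
    simp_rw [hrw]
    have key : (∑ k ∈ S, ∑ l ∈ S, if G.Adj k l then φ k l else 0)
        = -(∑ k ∈ S, ∑ l ∈ S, if G.Adj k l then φ k l else 0) := by
      conv_lhs => rw [Finset.sum_comm]
      rw [← Finset.sum_neg_distrib]
      apply Finset.sum_congr rfl
      intro k _
      rw [← Finset.sum_neg_distrib]
      apply Finset.sum_congr rfl
      intro l _
      by_cases h : G.Adj k l
      · simp [h, h.symm, hanti l k]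
      · rw [if_neg h, if_neg (fun h' : G.Adj l k => h h'.symm), neg_zero]
    linarith [key]
  have hB : ∑ k ∈ S, ∑ l ∈ (G.neighborFinset k).filter (fun l => l ∉ S), φ k l = φ i j := by
    have hinner : ∀ k ∈ S, (∑ l ∈ (G.neighborFinset k).filter (fun l => l ∉ S), φ k l)
        = if k = i then φ i j else 0 := by
      intro k hk
      by_cases hki : k = i
      · subst hki
        have : (G.neighborFinset k).filter (fun l => l ∉ S) = {j} := by
          ext l
          simp only [mem_filter, SimpleGraph.mem_neighborFinset, mem_singleton]
          constructor
          · intro h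
            exact (hcross k hk l (by simp only [mem_filter,
              SimpleGraph.mem_neighborFinset]; exact h)).2
          · rintro rfl; exact ⟨hij, hjS⟩
        rw [this]; simp
      · have : (G.neighborFinset k).filter (fun l => l ∉ S) = ∅ := by
          ext l
          simp only [mem_filter, SimpleGraph.mem_neighborFinset, notMem_empty, iff_false]
          intro h
          exact hki (hcross k hk l (by simp only [mem_filter,
            SimpleGraph.mem_neighborFinset]; exact h)).1
        rw [this]; simp [hki]
    rw [Finset.sum_congr rfl hinner, Finset.sum_ite_eq' S i (fun _ => φ i j), if_pos hiS]
  have := htot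
  simp_rw [hsplit] at this
  rw [Finset.sum_add_distrib, hA, hB, zero_add] at this
  exact this

theorem stmt_14 {N : ℕ} (G : SimpleGraph (Fin N)) (hT : G.IsTree) (r : ℝ) (hr : 0 < r)
    (x : Fin N → ℝ) (hstat : ∀ i, rhs G r x i = 0) :
    DetailedBalance G r x := by
  intro i j hij
  have hz : r * (x i - x j) - (x i - x j) ^ 3 = 0 :=
    tree_flow_zero hT (fun k l => r * (x k - x l) - (x k - x l) ^ 3)
      (fun k l => by ring) (fun k => by simpa [rhs] using hstat k) hij
  set d := x i - x j with hd
  have h2 : d * (r - d ^ 2) = 0 := by have : d * (r - d ^ 2) = r * d - d ^ 3 := by ring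
                                      rw [this]; linarith [hz]
  rcases mul_eq_zero.mp h2 with h | h
  · exact Or.inl h
  · have hd2 : d ^ 2 = r := by linarith
    have hs : Real.sqrt r ^ 2 = r := Real.sq_sqrt hr.le
    have hfac : (d - Real.sqrt r) * (d + Real.sqrt r) = 0 := by nlinarith
    rcases mul_eq_zero.mp hfac with h' | h'
    · exact Or.inr (Or.inl (by linarith))
    · exact Or.inr (Or.inr (by linarith))
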